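/- Suppose 0 < p < 1 and q > 0. Then S(t) → 0 and I(t) → 0 as t → ∞. -/

import Mathlib

open Filter Topology

/-- Claim (1) of Section 8.1 of the paper: for the SI ODE system
`S' = −β S^q I^p`, `I' = β S^q I^p − μ I` with `β, μ, q > 0` and `0 < p < 1`,
`S(0) = S₀ > 0`, `I(0) = I₀ > 0`, both `S(t) → 0` and `I(t) → 0` as `t → ∞`. -/
theorem stmt9 (β μ p q S₀ I₀ : ℝ) (S I : ℝ → ℝ)
    (hβ : 0 < β) (hμ : 0 < μ) (hp0 : 0 < p) (hp1 : p < 1) (hq : 0 < q)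
    (hS₀ : 0 < S₀) (hI₀ : 0 < I₀) (hS0 : S 0 = S₀) (hI0 : I 0 = I₀)
    (hScont : ContinuousOn S (Set.Ici 0)) (hIcont : ContinuousOn I (Set.Ici 0))
    (hSnonneg : ∀ t : ℝ, 0 ≤ t → 0 ≤ S t) (hIpos : ∀ t : ℝ, 0 ≤ t → 0 < I t)
    (hSode : ∀ t : ℝ, 0 < t → HasDerivAt S (-(β * S t ^ q * I t ^ p)) t)
    (hIode : ∀ t : ℝ, 0 < t → HasDerivAt I (β * S t ^ q * I t ^ p - μ * I t) t) :
    Tendsto S atTop (𝓝 0) ∧ Tendsto I atTop (𝓝 0) := by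
  set N : ℝ → ℝ := fun t => S t + I t with hNdef
  have hNode : ∀ t : ℝ, 0 < t → HasDerivAt N (-(μ * I t)) t := by
    intro t ht
    have h := (hSode t ht).add (hIode t ht)
    rw [show -(μ * I t) = -(β * S t ^ q * I t ^ p) + (β * S t ^ q * I t ^ p - μ * I t) by ring]
    exact h
  have hNcont : ContinuousOn N (Set.Ici 0) := hScont.add hIcont
  have hNnonneg : ∀ t : ℝ, 0 ≤ t → 0 ≤ N t := fun t ht =>
    add_nonneg (hSnonneg t ht) (hIpos t ht).le
  -- S is antitone on [0, ∞)
  have hSanti : AntitoneOn S (Set.Ici 0) := by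
    apply antitoneOn_of_deriv_nonpos (convex_Ici 0) hScont
    · intro t ht
      rw [interior_Ici] at ht
      exact (hSode t ht).differentiableAt.differentiableWithinAt
    · intro t ht
      rw [interior_Ici] at ht
      rw [(hSode t ht).deriv]
      have h1 : 0 ≤ S t ^ q := Real.rpow_nonneg (hSnonneg t ht.le) q
      have h2 : 0 ≤ I t ^ p := (Real.rpow_pos_of_pos (hIpos t ht.le) p).le
      have := mul_nonneg (mul_nonneg hβ.le h1) h2
      linarith
  -- N is antitone on [0, ∞)
  have hNanti : AntitoneOn N (Set.Ici 0) := by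
    apply antitoneOn_of_deriv_nonpos (convex_Ici 0) hNcont
    · intro t ht
      rw [interior_Ici] at ht
      exact (hNode t ht).differentiableAt.differentiableWithinAt
    · intro t ht
      rw [interior_Ici] at ht
      rw [(hNode t ht).deriv]
      have := hIpos t ht.le
      nlinarith
  -- S tends to A := inf
  set g : ℝ → ℝ := fun t => S (max t 0) with hgdef
  have hganti : Antitone g := fun a b hab =>
    hSanti (le_max_right a 0) (le_max_right b 0) (max_le_max hab le_rfl)
  have hgbdd : BddBelow (Set.range g) := by
    refine ⟨0, ?_⟩
    rintro x ⟨t, rfl⟩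
    exact hSnonneg _ (le_max_right t 0)
  set A := ⨅ t, g t with hAdef
  have hgS : g =ᶠ[atTop] S := by
    filter_upwards [eventually_ge_atTop (0 : ℝ)] with t ht
    simp [hgdef, max_eq_left ht]
  have hStend : Tendsto S atTop (𝓝 A) := (tendsto_atTop_ciInf hganti hgbdd).congr' hgS
  have hAle : ∀ t : ℝ, 0 ≤ t → A ≤ S t := by
    intro t ht
    have h := ciInf_le hgbdd t
    rwa [show g t = S t by simp [hgdef, max_eq_left ht]] at h
  have hA0 : 0 ≤ A := le_ciInf fun t => hSnonneg _ (le_max_right t 0)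
  -- N tends to L := inf
  set h : ℝ → ℝ := fun t => N (max t 0) with hhdef
  have hhanti : Antitone h := fun a b hab =>
    hNanti (le_max_right a 0) (le_max_right b 0) (max_le_max hab le_rfl)
  have hhbdd : BddBelow (Set.range h) := by
    refine ⟨0, ?_⟩
    rintro x ⟨t, rfl⟩
    exact hNnonneg _ (le_max_right t 0)
  set L := ⨅ t, h t with hLdef
  have hhN : h =ᶠ[atTop] N := by
    filter_upwards [eventually_ge_atTop (0 : ℝ)] with t ht
    simp [hhdef, max_eq_left ht]
  have hNtend : Tendsto N atTop (𝓝 L) := (tendsto_atTop_ciInf hhanti hhbdd).congr' hhN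
  -- I tends to L - A
  have hItend : Tendsto I atTop (𝓝 (L - A)) := by
    have := hNtend.sub hStend
    apply this.congr
    intro t
    simp [hNdef]
  -- Step 1 : L - A = 0, i.e. I → 0
  have hBzero : L - A = 0 := by
    by_contra hBne
    have hB0 : 0 ≤ L - A := by
      apply ge_of_tendsto hItend
      filter_upwards [eventually_ge_atTop (0 : ℝ)] with t ht
      exact (hIpos t ht).le
    have hBpos : 0 < L - A := lt_of_le_of_ne hB0 (Ne.symm hBne)
    set B := L - A with hBdef
    set k := μ * B / 2 with hkdef
    have hk : 0 < k := by positivity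
    -- eventually I t > B/2
    obtain ⟨t₁, ht₁⟩ := (eventually_atTop).mp (hItend.eventually (eventually_gt_nhds (by linarith : B / 2 < B)))
    set t₀ := max t₁ 0 with ht₀def
    have ht₀0 : (0:ℝ) ≤ t₀ := le_max_right _ _
    have hIbig : ∀ t : ℝ, t₀ ≤ t → B / 2 < I t := fun t ht => ht₁ t (le_trans (le_max_left _ _) ht)
    -- f t = N t + k t is antitone on [t₀, ∞)
    set f : ℝ → ℝ := fun t => N t + k * t with hfdef
    have hfanti : AntitoneOn f (Set.Ici t₀) := by
      apply antitoneOn_of_deriv_nonpos (convex_Ici t₀)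
      · exact (hNcont.mono (Set.Ici_subset_Ici.mpr ht₀0)).add
          ((continuous_const.mul continuous_id).continuousOn)
      · intro t ht
        rw [interior_Ici] at ht
        have ht' : 0 < t := lt_of_le_of_lt ht₀0 ht
        exact (((hNode t ht').add ((hasDerivAt_id t).const_mul k))).differentiableAt.differentiableWithinAt
      · intro t ht
        rw [interior_Ici] at ht
        have ht' : 0 < t := lt_of_le_of_lt ht₀0 ht
        have hd : HasDerivAt f (-(μ * I t) + k * 1) t :=
          (hNode t ht').add ((hasDerivAt_id t).const_mul k)
        rw [hd.deriv]
        have := hIbig t (le_of_lt ht)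
        rw [hkdef]
        nlinarith
    have hT : t₀ ≤ t₀ + N t₀ / k + 1 := by
      have h0 : 0 ≤ N t₀ / k := div_nonneg (hNnonneg t₀ ht₀0) hk.le
      linarith
    have key := hfanti Set.self_mem_Ici (Set.mem_Ici.mpr hT) hT
    have hNT : 0 ≤ N (t₀ + N t₀ / k + 1) := hNnonneg _ (le_trans ht₀0 hT)
    simp only [hfdef] at key
    have hexp : k * (N t₀ / k) = N t₀ := by field_simp
    nlinarith [key, hexp, hk, hNT]
  have hI0tend : Tendsto I atTop (𝓝 0) := by rwa [hBzero] at hItend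
  -- Step 2 : A = 0
  have hAzero : A = 0 := by
    by_contra hAne
    have hApos : 0 < A := lt_of_le_of_ne hA0 (Ne.symm hAne)
    set D := β * A ^ q with hDdef
    have hD : 0 < D := mul_pos hβ (Real.rpow_pos_of_pos hApos q)
    set c : ℝ := (D / (2 * μ)) ^ (1 / (1 - p)) with hcdef
    have hc : 0 < c := Real.rpow_pos_of_pos (by positivity) _
    have h1p : 0 < 1 - p := by linarith
    have hcpow : c ^ (1 - p) = D / (2 * μ) := by
      rw [hcdef, ← Real.rpow_mul (by positivity), one_div, inv_mul_cancel₀ h1p.ne', Real.rpow_one]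
    obtain ⟨t₁, ht₁⟩ := (eventually_atTop).mp (hI0tend.eventually (eventually_lt_nhds hc))
    set t₀ := max t₁ 0 with ht₀def
    have ht₀0 : (0:ℝ) ≤ t₀ := le_max_right _ _
    have hIsmall : ∀ t : ℝ, t₀ ≤ t → I t < c := fun t ht => ht₁ t (le_trans (le_max_left _ _) ht)
    have hImono : StrictMonoOn I (Set.Ici t₀) := by
      apply strictMonoOn_of_deriv_pos (convex_Ici t₀)
        (hIcont.mono (Set.Ici_subset_Ici.mpr ht₀0))
      intro t ht
      rw [interior_Ici] at ht
      have ht' : 0 < t := lt_of_le_of_lt ht₀0 ht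
      rw [(hIode t ht').deriv]
      have hIt : 0 < I t := hIpos t ht'.le
      have hIp : 0 < I t ^ p := Real.rpow_pos_of_pos hIt p
      -- β S^q I^p ≥ D I^p
      have hSq : A ^ q ≤ S t ^ q := Real.rpow_le_rpow hApos.le (hAle t ht'.le) hq.le
      have e1 : D * I t ^ p ≤ β * S t ^ q * I t ^ p :=
        mul_le_mul_of_nonneg_right (mul_le_mul_of_nonneg_left hSq hβ.le) hIp.le
      -- μ I ≤ D/2 I^p
      have hsplit : I t ^ (1 - p) * I t ^ p = I t := by
        rw [← Real.rpow_add hIt]; norm_num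
      have h3 : I t ^ (1 - p) ≤ D / (2 * μ) := by
        rw [← hcpow]
        exact Real.rpow_le_rpow hIt.le (hIsmall t ht.le).le h1p.le
      have e2 : μ * I t ≤ D / 2 * I t ^ p := by
        calc μ * I t = μ * (I t ^ (1 - p) * I t ^ p) := by rw [hsplit]
          _ ≤ μ * (D / (2 * μ) * I t ^ p) := by
              apply mul_le_mul_of_nonneg_left _ hμ.le
              exact mul_le_mul_of_nonneg_right h3 hIp.le
          _ = D / 2 * I t ^ p := by field_simp
      nlinarith
    -- contradiction with I → 0
    have hmem : t₀ + 1 ∈ Set.Ici t₀ := by simp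
    have hlb : I (t₀ + 1) ≤ 0 := by
      apply ge_of_tendsto hI0tend
      filter_upwards [eventually_ge_atTop (t₀ + 1)] with t ht
      exact (hImono.monotoneOn hmem (Set.mem_Ici.mpr (by linarith : t₀ ≤ t)) ht)
    exact absurd hlb (not_le.mpr (hIpos (t₀ + 1) (by linarith)))
  rw [hAzero] at hStend
  exact ⟨hStend, hI0tend⟩
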